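/- (Lemma 2(iv): dual strong convexity under Assumption B.) Assume f1: ℝ^{dx} → ℝ is μx-strongly convex and Lx-smooth (Lx ≥ μx > 0), f2 = 0, and g1(y) = g3(y) + (1/2) yᵀPy + bᵀy where g3 is convex and differentiable and P is symmetric positive semidefinite with BBᵀ + Lx·P positive definite. For y ∈ ℝ^{dy}, let x*(y) denote the unique minimizer over x of f1(x) + ⟨Bᵀy, x⟩, and define G(y) = ∇g3(y) + Py + b − B x*(y). Then ⟨G(y) − G(y'), y − y'⟩ ≥ (λmin(BBᵀ + Lx·P)/Lx)‖y − y'‖² for all y, y' ∈ ℝ^{dy} (i.e., the dual function φ is (λmin(BBᵀ + Lx·P)/Lx)-strongly convex). -/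

import Mathlib

open scoped RealInnerProductSpace
open Matrix

/-- Action of a matrix on Euclidean space. -/
noncomputable def mulE {m n : ℕ} (B : Matrix (Fin m) (Fin n) ℝ)
    (x : EuclideanSpace ℝ (Fin n)) : EuclideanSpace ℝ (Fin m) :=
  Matrix.toEuclideanLin B x

/-- Largest singular value (operator norm) of a matrix. -/
noncomputable def sigmaMax {m n : ℕ} (B : Matrix (Fin m) (Fin n) ℝ) : ℝ :=
  ‖LinearMap.toContinuousLinearMap (Matrix.toEuclideanLin B)‖

/-- Largest eigenvalue of a symmetric matrix (Rayleigh quotient formulation). -/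
noncomputable def lambdaMax {n : ℕ} (P : Matrix (Fin n) (Fin n) ℝ) : ℝ :=
  ⨆ v : Metric.sphere (0 : EuclideanSpace ℝ (Fin n)) 1,
    ⟪mulE P (v : EuclideanSpace ℝ (Fin n)), (v : EuclideanSpace ℝ (Fin n))⟫

/-- Smallest eigenvalue of a symmetric matrix (Rayleigh quotient formulation). -/
noncomputable def lambdaMin {n : ℕ} (P : Matrix (Fin n) (Fin n) ℝ) : ℝ :=
  ⨅ v : Metric.sphere (0 : EuclideanSpace ℝ (Fin n)) 1,
    ⟪mulE P (v : EuclideanSpace ℝ (Fin n)), (v : EuclideanSpace ℝ (Fin n))⟫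

/-- `f` is `μ`-strongly convex: `f - μ/2 ‖·‖²` is convex. -/
def StrongConvex {n : ℕ} (μ : ℝ) (f : EuclideanSpace ℝ (Fin n) → ℝ) : Prop :=
  ConvexOn ℝ Set.univ fun x => f x - μ / 2 * ‖x‖ ^ 2

/-- A function with values in `ℝ ∪ {+∞}` (modelled by `EReal`) is proper. -/
def ProperER {n : ℕ} (f : EuclideanSpace ℝ (Fin n) → EReal) : Prop :=
  (∀ x, f x ≠ ⊥) ∧ ∃ x, f x ≠ ⊤

/-- Convexity for `EReal`-valued functions. -/
def ConvexER {n : ℕ} (f : EuclideanSpace ℝ (Fin n) → EReal) : Prop :=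
  ∀ x y : EuclideanSpace ℝ (Fin n), ∀ a b : ℝ, 0 ≤ a → 0 ≤ b → a + b = 1 →
    f (a • x + b • y) ≤ (a : EReal) * f x + (b : EReal) * f y

/-- `s` is a subgradient of the `EReal`-valued convex function `f` at `x`. -/
def IsSubgradAt {n : ℕ} (f : EuclideanSpace ℝ (Fin n) → EReal)
    (x s : EuclideanSpace ℝ (Fin n)) : Prop :=
  ∀ z, f x + ((⟪s, z - x⟫ : ℝ) : EReal) ≤ f z

/-- `p` is the proximal point `prox_{t g}(w)`, i.e. it minimizes `g(·) + 1/(2t)‖· - w‖²`. -/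
def IsProx {n : ℕ} (g : EuclideanSpace ℝ (Fin n) → EReal) (t : ℝ)
    (w p : EuclideanSpace ℝ (Fin n)) : Prop :=
  ∀ z, g p + ((1 / (2 * t) * ‖p - w‖ ^ 2 : ℝ) : EReal)
      ≤ g z + ((1 / (2 * t) * ‖z - w‖ ^ 2 : ℝ) : EReal)


open Set Filter Topology

section Helpers

lemma hasGradientAt_inner' {n : ℕ} (c : EuclideanSpace ℝ (Fin n)) (x : EuclideanSpace ℝ (Fin n)) :
    HasGradientAt (fun z => (⟪c, z⟫ : ℝ)) c x :=
  (InnerProductSpace.toDual ℝ (EuclideanSpace ℝ (Fin n)) c).hasFDerivAt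

lemma hasDerivAt_line' {n : ℕ} {f : EuclideanSpace ℝ (Fin n) → ℝ}
    {f' : EuclideanSpace ℝ (Fin n) → EuclideanSpace ℝ (Fin n)}
    (hf : ∀ x, HasGradientAt f (f' x) x) (x d : EuclideanSpace ℝ (Fin n)) (t : ℝ) :
    HasDerivAt (fun s : ℝ => f (x + s • d)) ⟪f' (x + t • d), d⟫ t := by
  have hc : HasDerivAt (fun s : ℝ => x + s • d) d t := by
    simpa using ((hasDerivAt_id t).smul_const d).const_add x
  have hF : HasFDerivAt f (InnerProductSpace.toDual ℝ _ (f' (x + t • d))) (x + t • d) := hf _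
  have h := hF.comp_hasDerivAt t hc
  simp at h
  exact h

lemma first_order' {n : ℕ} {f : EuclideanSpace ℝ (Fin n) → ℝ}
    {f' : EuclideanSpace ℝ (Fin n) → EuclideanSpace ℝ (Fin n)}
    (hf : ∀ x, HasGradientAt f (f' x) x) (hconv : ConvexOn ℝ Set.univ f)
    (x z : EuclideanSpace ℝ (Fin n)) :
    f x + ⟪f' x, z - x⟫ ≤ f z := by
  set d := z - x with hd
  set g : ℝ → ℝ := fun s => f (x + s • d) with hg
  have hder : HasDerivAt g ⟪f' x, d⟫ 0 := by
    simpa using hasDerivAt_line' hf x d 0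
  have htend : Tendsto (slope g 0) (𝓝[>] 0) (𝓝 ⟪f' x, d⟫) :=
    (hasDerivAt_iff_tendsto_slope.1 hder).mono_left
      (nhdsWithin_mono 0 (fun t ht => ne_of_gt ht))
  have hev : ∀ᶠ t in 𝓝[>] (0:ℝ), slope g 0 t ≤ f z - f x := by
    filter_upwards [Ioc_mem_nhdsGT_of_mem (Set.left_mem_Ico.2 one_pos)] with t ht
    have ht0 : 0 < t := ht.1
    have ht1 : t ≤ 1 := ht.2
    have hcx := hconv.2 (Set.mem_univ x) (Set.mem_univ z)
      (show (0:ℝ) ≤ 1 - t by linarith) (show (0:ℝ) ≤ t from ht0.le)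
      (show (1 - t) + t = 1 by ring)
    have heq : (1 - t) • x + t • z = x + t • d := by
      rw [hd]; module
    rw [heq] at hcx
    have hsl : slope g 0 t = (f (x + t • d) - f x) / t := by
      simp [slope, hg, div_eq_inv_mul]
    simp only [smul_eq_mul] at hcx
    rw [hsl, div_le_iff₀ ht0]
    nlinarith [hcx]
  have hle : ⟪f' x, d⟫ ≤ f z - f x := le_of_tendsto htend hev
  linarith

lemma grad_mono' {n : ℕ} {f : EuclideanSpace ℝ (Fin n) → ℝ}
    {f' : EuclideanSpace ℝ (Fin n) → EuclideanSpace ℝ (Fin n)}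
    (hf : ∀ x, HasGradientAt f (f' x) x) (hconv : ConvexOn ℝ Set.univ f)
    (a b : EuclideanSpace ℝ (Fin n)) :
    0 ≤ ⟪f' a - f' b, a - b⟫ := by
  have h1 := first_order' hf hconv a b
  have h2 := first_order' hf hconv b a
  have e : (⟪f' a - f' b, a - b⟫ : ℝ) = -⟪f' a, b - a⟫ - ⟪f' b, a - b⟫ := by
    rw [inner_sub_left]
    rw [show (b - a : EuclideanSpace ℝ (Fin n)) = -(a - b) by abel, inner_neg_right]
    ring
  rw [e]; linarith

lemma descent' {n : ℕ} {L : ℝ} {f : EuclideanSpace ℝ (Fin n) → ℝ}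
    {f' : EuclideanSpace ℝ (Fin n) → EuclideanSpace ℝ (Fin n)}
    (hf : ∀ x, HasGradientAt f (f' x) x)
    (hlip : ∀ x x', ‖f' x - f' x'‖ ≤ L * ‖x - x'‖)
    (x d : EuclideanSpace ℝ (Fin n)) :
    f (x + d) ≤ f x + ⟪f' x, d⟫ + L / 2 * ‖d‖ ^ 2 := by
  set h : ℝ → ℝ := fun t => f (x + t • d) - t * ⟪f' x, d⟫ - L * t ^ 2 / 2 * ‖d‖ ^ 2 with hh
  have hderiv : ∀ t : ℝ, HasDerivAt h (⟪f' (x + t • d), d⟫ - ⟪f' x, d⟫ - L * t * ‖d‖ ^ 2) t := by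
    intro t
    have h1 := hasDerivAt_line' hf x d t
    have h2 : HasDerivAt (fun t : ℝ => t * ⟪f' x, d⟫) ⟪f' x, d⟫ t := by
      simpa using (hasDerivAt_id t).mul_const (⟪f' x, d⟫ : ℝ)
    have h3 : HasDerivAt (fun t : ℝ => L * t ^ 2 / 2 * ‖d‖ ^ 2) (L * t * ‖d‖ ^ 2) t := by
      have hp : HasDerivAt (fun t : ℝ => t ^ 2) (2 * t) t := by
        simpa using hasDerivAt_pow 2 t
      have := ((hp.const_mul L).div_const 2).mul_const (‖d‖ ^ 2)
      exact this.congr_deriv (by ring)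
    exact (h1.sub h2).sub h3
  have anti : AntitoneOn h (Icc 0 1) := by
    apply antitoneOn_of_deriv_nonpos (convex_Icc 0 1)
    · exact fun t _ => (hderiv t).differentiableAt.continuousAt.continuousWithinAt
    · intro t _; exact (hderiv t).differentiableAt.differentiableWithinAt
    · intro t ht
      rw [interior_Icc] at ht
      rw [(hderiv t).deriv]
      have e1 : (⟪f' (x + t • d), d⟫ : ℝ) - ⟪f' x, d⟫ = ⟪f' (x + t • d) - f' x, d⟫ := by
        rw [inner_sub_left]
      have e2 : (⟪f' (x + t • d) - f' x, d⟫ : ℝ) ≤ ‖f' (x + t • d) - f' x‖ * ‖d‖ :=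
        real_inner_le_norm _ _
      have e3 : ‖f' (x + t • d) - f' x‖ ≤ L * (t * ‖d‖) := by
        have := hlip (x + t • d) x
        simpa [norm_smul, abs_of_pos ht.1] using this
      have hd0 : (0:ℝ) ≤ ‖d‖ := norm_nonneg d
      nlinarith [e2, e3, mul_nonneg hd0 hd0]
  have h10 := anti (show (0:ℝ) ∈ Icc (0:ℝ) 1 by constructor <;> norm_num)
    (show (1:ℝ) ∈ Icc (0:ℝ) 1 by constructor <;> norm_num) zero_le_one
  simp only [hh, one_smul, zero_smul, add_zero, one_pow, zero_pow, mul_zero, zero_mul,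
    sub_zero, mul_one] at h10
  nlinarith [h10]

lemma coco_half' {n : ℕ} {L : ℝ} (hL : 0 < L) {f : EuclideanSpace ℝ (Fin n) → ℝ}
    {f' : EuclideanSpace ℝ (Fin n) → EuclideanSpace ℝ (Fin n)}
    (hf : ∀ x, HasGradientAt f (f' x) x) (hconv : ConvexOn ℝ Set.univ f)
    (hlip : ∀ x x', ‖f' x - f' x'‖ ≤ L * ‖x - x'‖)
    (a b : EuclideanSpace ℝ (Fin n)) :
    f b + ⟪f' b, a - b⟫ + 1 / (2 * L) * ‖f' a - f' b‖ ^ 2 ≤ f a := by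
  set u : EuclideanSpace ℝ (Fin n) := f' a - f' b with hu
  set d : EuclideanSpace ℝ (Fin n) := (-(1 / L)) • u with hd
  have h1 := descent' hf hlip a d
  have h2 := first_order' hf hconv b (a + d)
  have e1 : (⟪f' b, a + d - b⟫ : ℝ) = ⟪f' b, a - b⟫ + ⟪f' b, d⟫ := by
    rw [show (a + d - b : EuclideanSpace ℝ (Fin n)) = (a - b) + d by abel, inner_add_right]
  have e2 : (⟪f' a, d⟫ : ℝ) - ⟪f' b, d⟫ = ⟪u, d⟫ := by rw [hu, inner_sub_left]
  have e3 : (⟪u, d⟫ : ℝ) = -(1 / L) * ‖u‖ ^ 2 := by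
    rw [hd, real_inner_smul_right, real_inner_self_eq_norm_sq]
  have e4 : ‖d‖ ^ 2 = (1 / L) ^ 2 * ‖u‖ ^ 2 := by
    rw [hd, norm_smul]
    simp [abs_of_pos (by positivity : (0:ℝ) < 1 / L)]
    rw [abs_of_pos hL]
    ring
  have e5 : L / 2 * ‖d‖ ^ 2 = 1 / (2 * L) * ‖u‖ ^ 2 := by
    rw [e4]; field_simp
  rw [e1] at h2
  have hhalf : 1 / L = 1 / (2 * L) + 1 / (2 * L) := by field_simp; ring
  have hmul := congrArg (fun r : ℝ => r * ‖u‖ ^ 2) hhalf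
  simp only [add_mul] at hmul
  linarith [h1, h2, e2, e3, e5, hmul]

lemma coco' {n : ℕ} {L : ℝ} (hL : 0 < L) {f : EuclideanSpace ℝ (Fin n) → ℝ}
    {f' : EuclideanSpace ℝ (Fin n) → EuclideanSpace ℝ (Fin n)}
    (hf : ∀ x, HasGradientAt f (f' x) x) (hconv : ConvexOn ℝ Set.univ f)
    (hlip : ∀ x x', ‖f' x - f' x'‖ ≤ L * ‖x - x'‖)
    (a b : EuclideanSpace ℝ (Fin n)) :
    1 / L * ‖f' a - f' b‖ ^ 2 ≤ ⟪f' a - f' b, a - b⟫ := by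
  have h1 := coco_half' hL hf hconv hlip a b
  have h2 := coco_half' hL hf hconv hlip b a
  have e0 : ‖f' b - f' a‖ = ‖f' a - f' b‖ := norm_sub_rev _ _
  rw [e0] at h2
  have e1 : (⟪f' a - f' b, a - b⟫ : ℝ) = ⟪f' a, a - b⟫ - ⟪f' b, a - b⟫ := inner_sub_left _ _ _
  have e2 : (⟪f' a, b - a⟫ : ℝ) = -⟪f' a, a - b⟫ := by
    rw [show (b - a : EuclideanSpace ℝ (Fin n)) = -(a - b) by abel, inner_neg_right]
  have hhalf : 1 / L = 1 / (2 * L) + 1 / (2 * L) := by field_simp; ring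
  rw [e1, hhalf, add_mul]
  linarith [h1, h2, e2.le, e2.ge]

lemma mulE_adj {m n : ℕ} (B : Matrix (Fin m) (Fin n) ℝ) (x : EuclideanSpace ℝ (Fin n))
    (y : EuclideanSpace ℝ (Fin m)) : ⟪mulE B x, y⟫ = ⟪x, mulE Bᵀ y⟫ := by
  unfold mulE
  have h : Bᵀ = Bᴴ := by
    ext i j; simp [Matrix.conjTranspose_apply]
  rw [h, Matrix.toEuclideanLin_conjTranspose_eq_adjoint, LinearMap.adjoint_inner_right]

lemma mulE_mul {m n k : ℕ} (A : Matrix (Fin m) (Fin n) ℝ) (B : Matrix (Fin n) (Fin k) ℝ)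
    (x : EuclideanSpace ℝ (Fin k)) : mulE (A * B) x = mulE A (mulE B x) := by
  simp [mulE, Matrix.toEuclideanLin_apply, Matrix.mulVec_mulVec]

lemma mulE_add {m n : ℕ} (A B : Matrix (Fin m) (Fin n) ℝ) (x : EuclideanSpace ℝ (Fin n)) :
    mulE (A + B) x = mulE A x + mulE B x := by
  unfold mulE; rw [map_add]; rfl

lemma mulE_smulM {m n : ℕ} (c : ℝ) (A : Matrix (Fin m) (Fin n) ℝ) (x : EuclideanSpace ℝ (Fin n)) :
    mulE (c • A) x = c • mulE A x := by
  unfold mulE; rw [_root_.map_smul]; rfl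

lemma mulE_smul {m n : ℕ} (c : ℝ) (A : Matrix (Fin m) (Fin n) ℝ) (x : EuclideanSpace ℝ (Fin n)) :
    mulE A (c • x) = c • mulE A x := by
  unfold mulE; exact map_smul _ _ _

lemma mulE_sub {m n : ℕ} (A : Matrix (Fin m) (Fin n) ℝ) (x y : EuclideanSpace ℝ (Fin n)) :
    mulE A (x - y) = mulE A x - mulE A y := by
  unfold mulE; exact map_sub _ _ _

lemma lambdaMin_le' {n : ℕ} (M : Matrix (Fin n) (Fin n) ℝ) (d : EuclideanSpace ℝ (Fin n)) :
    lambdaMin M * ‖d‖ ^ 2 ≤ ⟪mulE M d, d⟫ := by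
  rcases eq_or_ne d 0 with rfl | hd
  · simp [mulE]
  · have hb : BddBelow (Set.range fun v : Metric.sphere (0 : EuclideanSpace ℝ (Fin n)) 1 =>
        (⟪mulE M (v : EuclideanSpace ℝ (Fin n)), (v : EuclideanSpace ℝ (Fin n))⟫ : ℝ)) := by
      refine ⟨-‖LinearMap.toContinuousLinearMap (Matrix.toEuclideanLin M)‖, ?_⟩
      rintro _ ⟨v, rfl⟩
      have hv : ‖(v : EuclideanSpace ℝ (Fin n))‖ = 1 := by
        simpa using mem_sphere_zero_iff_norm.1 v.2
      have h1 : |(⟪mulE M (v : EuclideanSpace ℝ (Fin n)), (v : EuclideanSpace ℝ (Fin n))⟫ : ℝ)|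
          ≤ ‖mulE M (v : EuclideanSpace ℝ (Fin n))‖ * ‖(v : EuclideanSpace ℝ (Fin n))‖ :=
        abs_real_inner_le_norm _ _
      have h2 : ‖mulE M (v : EuclideanSpace ℝ (Fin n))‖
          ≤ ‖LinearMap.toContinuousLinearMap (Matrix.toEuclideanLin M)‖ *
            ‖(v : EuclideanSpace ℝ (Fin n))‖ :=
        (LinearMap.toContinuousLinearMap (Matrix.toEuclideanLin M)).le_opNorm _
      rw [hv, mul_one] at h1 h2
      have h3 := neg_abs_le
        (⟪mulE M (v : EuclideanSpace ℝ (Fin n)), (v : EuclideanSpace ℝ (Fin n))⟫ : ℝ)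
      linarith
    have hdn : (0:ℝ) < ‖d‖ := norm_pos_iff.2 hd
    set v : EuclideanSpace ℝ (Fin n) := ‖d‖⁻¹ • d with hv
    have hvs : v ∈ Metric.sphere (0 : EuclideanSpace ℝ (Fin n)) 1 := by
      rw [mem_sphere_zero_iff_norm, hv, norm_smul]
      simp [abs_of_pos (inv_pos.2 hdn), inv_mul_cancel₀ hdn.ne']
    have hle : lambdaMin M ≤ ⟪mulE M v, v⟫ := ciInf_le hb ⟨v, hvs⟩
    have he : (⟪mulE M v, v⟫ : ℝ) = ‖d‖⁻¹ ^ 2 * ⟪mulE M d, d⟫ := by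
      rw [hv, mulE_smul, real_inner_smul_left, real_inner_smul_right]; ring
    rw [he] at hle
    have h2 : (0:ℝ) < ‖d‖ ^ 2 := by positivity
    have h3 := mul_le_mul_of_nonneg_right hle h2.le
    calc lambdaMin M * ‖d‖ ^ 2 ≤ ‖d‖⁻¹ ^ 2 * ⟪mulE M d, d⟫ * ‖d‖ ^ 2 := h3
      _ = ⟪mulE M d, d⟫ := by field_simp

lemma grad_eq_zero_of_min' {n : ℕ} {f : EuclideanSpace ℝ (Fin n) → ℝ}
    {f' a : EuclideanSpace ℝ (Fin n)}
    (hf : HasGradientAt f f' a) (hmin : ∀ x, f a ≤ f x) : f' = 0 := by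
  have hloc : IsLocalMin f a := Filter.Eventually.of_forall hmin
  have hfd : HasFDerivAt f (InnerProductSpace.toDual ℝ _ f') a := hf
  have h0 := hloc.hasFDerivAt_eq_zero hfd
  have h2 : InnerProductSpace.toDual ℝ (EuclideanSpace ℝ (Fin n)) f' =
      InnerProductSpace.toDual ℝ (EuclideanSpace ℝ (Fin n)) 0 := by
    rw [h0]; simp
  exact (InnerProductSpace.toDual ℝ (EuclideanSpace ℝ (Fin n))).injective h2

lemma grad_sum_min' {n : ℕ} {f : EuclideanSpace ℝ (Fin n) → ℝ}
    {f' : EuclideanSpace ℝ (Fin n) → EuclideanSpace ℝ (Fin n)}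
    (hf : ∀ x, HasGradientAt f (f' x) x) (c a : EuclideanSpace ℝ (Fin n))
    (hmin : ∀ x, f a + ⟪c, a⟫ ≤ f x + ⟪c, x⟫) : f' a = -c := by
  have hg : HasGradientAt (fun x => f x + ⟪c, x⟫) (f' a + c) a := by
    have h1 : HasFDerivAt f (InnerProductSpace.toDual ℝ _ (f' a)) a := hf a
    have h2 : HasFDerivAt (fun z => (⟪c, z⟫ : ℝ)) (InnerProductSpace.toDual ℝ _ c) a :=
      hasGradientAt_inner' c a
    have h3 := h1.add h2
    have h4 : InnerProductSpace.toDual ℝ (EuclideanSpace ℝ (Fin n)) (f' a + c) =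
        InnerProductSpace.toDual ℝ _ (f' a) + InnerProductSpace.toDual ℝ _ c := map_add _ _ _
    show HasFDerivAt _ _ _
    rw [h4]
    exact h3
  have h0 := grad_eq_zero_of_min' hg hmin
  have h5 : f' a + c = 0 := h0
  linear_combination (norm := module) h5

end Helpers

/-- Lemma 2(iv): dual strong convexity under Assumption B. -/
theorem dual_strongly_monotone_assumption_B {dx dy : ℕ} (μx Lx : ℝ)
    (hμx : 0 < μx) (hLx : μx ≤ Lx)
    (f1 : EuclideanSpace ℝ (Fin dx) → ℝ)
    (f1' : EuclideanSpace ℝ (Fin dx) → EuclideanSpace ℝ (Fin dx))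
    (hf1grad : ∀ x, HasGradientAt f1 (f1' x) x)
    (hf1sc : StrongConvex μx f1)
    (hf1sm : ∀ x x', ‖f1' x - f1' x'‖ ≤ Lx * ‖x - x'‖)
    (g3 : EuclideanSpace ℝ (Fin dy) → ℝ)
    (g3' : EuclideanSpace ℝ (Fin dy) → EuclideanSpace ℝ (Fin dy))
    (hg3grad : ∀ y, HasGradientAt g3 (g3' y) y)
    (hg3conv : ConvexOn ℝ Set.univ g3)
    (b : EuclideanSpace ℝ (Fin dy))
    (B : Matrix (Fin dy) (Fin dx) ℝ)
    (P : Matrix (Fin dy) (Fin dy) ℝ) (hP : P.PosSemidef)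
    (hBP : (B * Bᵀ + Lx • P).PosDef)
    (xstar : EuclideanSpace ℝ (Fin dy) → EuclideanSpace ℝ (Fin dx))
    (hxstar : ∀ y x, f1 (xstar y) + ⟪mulE Bᵀ y, xstar y⟫ ≤ f1 x + ⟪mulE Bᵀ y, x⟫) :
    ∀ y y' : EuclideanSpace ℝ (Fin dy),
      (lambdaMin (B * Bᵀ + Lx • P) / Lx) * ‖y - y'‖ ^ 2 ≤
        ⟪(g3' y + mulE P y + b - mulE B (xstar y)) -
          (g3' y' + mulE P y' + b - mulE B (xstar y')), y - y'⟫ := by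
  intro y y'
  have hLx0 : (0:ℝ) < Lx := lt_of_lt_of_le hμx hLx
  set d : EuclideanSpace ℝ (Fin dy) := y - y' with hdd
  -- f1 is convex
  have hconvf1 : ConvexOn ℝ Set.univ f1 := by
    have hsc : StrongConvexOn Set.univ μx f1 := strongConvexOn_iff_convex.2 hf1sc
    exact strongConvexOn_zero.1 (hsc.mono hμx.le)
  -- gradient of f1 at the minimizer
  have hgradmin : ∀ z, f1' (xstar z) = -(mulE Bᵀ z) := fun z =>
    grad_sum_min' hf1grad (mulE Bᵀ z) (xstar z) (hxstar z)
  -- monotonicity of ∇g3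
  have hg3m : (0:ℝ) ≤ ⟪g3' y - g3' y', d⟫ := grad_mono' hg3grad hg3conv y y'
  -- cocoercivity of ∇f1
  set u : EuclideanSpace ℝ (Fin dx) := mulE Bᵀ d with hu
  have hdiff : f1' (xstar y') - f1' (xstar y) = u := by
    rw [hgradmin y, hgradmin y', hu, hdd, mulE_sub]
    abel
  have hco := coco' hLx0 hf1grad hconvf1 hf1sm (xstar y') (xstar y)
  rw [hdiff] at hco
  have hBx : (⟪mulE B (xstar y' - xstar y), d⟫ : ℝ) = ⟪u, xstar y' - xstar y⟫ := by
    rw [mulE_adj, real_inner_comm, hu]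
  have hco2 : 1 / Lx * ‖u‖ ^ 2 ≤ ⟪mulE B (xstar y' - xstar y), d⟫ := by
    rw [hBx]; exact hco
  -- identify ‖u‖² with the quadratic form of B Bᵀ
  have hBBt : (⟪mulE (B * Bᵀ) d, d⟫ : ℝ) = ‖u‖ ^ 2 := by
    rw [mulE_mul, mulE_adj, ← hu, real_inner_self_eq_norm_sq]
  -- quadratic form of the combined matrix
  have hM : (⟪mulE (B * Bᵀ + Lx • P) d, d⟫ : ℝ) = ‖u‖ ^ 2 + Lx * ⟪mulE P d, d⟫ := by
    rw [mulE_add, inner_add_left, hBBt, mulE_smulM, real_inner_smul_left]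
  have hkey := lambdaMin_le' (B * Bᵀ + Lx • P) d
  rw [hM] at hkey
  -- expand the right-hand side
  have hexp : (⟪(g3' y + mulE P y + b - mulE B (xstar y)) -
      (g3' y' + mulE P y' + b - mulE B (xstar y')), d⟫ : ℝ)
      = ⟪g3' y - g3' y', d⟫ + ⟪mulE P d, d⟫ + ⟪mulE B (xstar y' - xstar y), d⟫ := by
    have e : (g3' y + mulE P y + b - mulE B (xstar y)) -
        (g3' y' + mulE P y' + b - mulE B (xstar y'))
        = (g3' y - g3' y') + mulE P d + mulE B (xstar y' - xstar y) := by
      rw [hdd, mulE_sub P, mulE_sub B]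
      abel
    rw [e, inner_add_left, inner_add_left]
  rw [hexp]
  -- combine
  have hinv : (0:ℝ) ≤ 1 / Lx := by positivity
  have h6 := mul_le_mul_of_nonneg_left hkey hinv
  have hLL : 1 / Lx * Lx = 1 := by field_simp
  have h7 : lambdaMin (B * Bᵀ + Lx • P) / Lx * ‖d‖ ^ 2
      ≤ 1 / Lx * ‖u‖ ^ 2 + ⟪mulE P d, d⟫ := by
    calc lambdaMin (B * Bᵀ + Lx • P) / Lx * ‖d‖ ^ 2
        = 1 / Lx * (lambdaMin (B * Bᵀ + Lx • P) * ‖d‖ ^ 2) := by ring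
      _ ≤ 1 / Lx * (‖u‖ ^ 2 + Lx * ⟪mulE P d, d⟫) := h6
      _ = 1 / Lx * ‖u‖ ^ 2 + (1 / Lx * Lx) * ⟪mulE P d, d⟫ := by ring
      _ = 1 / Lx * ‖u‖ ^ 2 + ⟪mulE P d, d⟫ := by rw [hLL]; ring
  linarith [hg3m, hco2, h7]
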